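/- Let e₁, e₂ ∈ ℝ² be linearly independent vectors and set e₃ = −e₁ − e₂ (so that e₁, e₂, e₃ are the edge vectors of a non-degenerate triangle), and let C > 0. Then there exists a unique real symmetric positive definite 2 × 2 matrix 𝓜 such that eₖᵀ 𝓜 eₖ = C for k = 1, 2, 3. -/

import Mathlib

open Matrix

/-- For a non-degenerate triangle with edge vectors `e₁, e₂, e₃ = −e₁ − e₂` and a
constant `C > 0`, there exists a unique symmetric positive definite `2 × 2` metric
tensor `𝓜` such that `eₖᵀ 𝓜 eₖ = C` for `k = 1, 2, 3`. -/
theorem metric_tensor_exists_unique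
    (e₁ e₂ : Fin 2 → ℝ) (hind : LinearIndependent ℝ ![e₁, e₂])
    (e₃ : Fin 2 → ℝ) (he₃ : e₃ = -e₁ - e₂) (C : ℝ) (hC : 0 < C) :
    ∃! 𝓜 : Matrix (Fin 2) (Fin 2) ℝ,
      𝓜.IsSymm ∧ 𝓜.PosDef ∧
        e₁ ⬝ᵥ (𝓜 *ᵥ e₁) = C ∧ e₂ ⬝ᵥ (𝓜 *ᵥ e₂) = C ∧ e₃ ⬝ᵥ (𝓜 *ᵥ e₃) = C := by
  -- `P` has columns `e₁, e₂`.
  set P : Matrix (Fin 2) (Fin 2) ℝ := (Matrix.of ![e₁, e₂])ᵀ with hPdef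
  have hPT : IsUnit Pᵀ := by
    rw [hPdef, transpose_transpose]
    exact Matrix.linearIndependent_rows_iff_isUnit.mp hind
  have hPu : IsUnit P := by rwa [← Matrix.isUnit_transpose]
  have : Invertible P := hPu.invertible
  have : Invertible Pᵀ := hPT.invertible
  -- the target matrix in the basis `e₁, e₂`
  set Q : Matrix (Fin 2) (Fin 2) ℝ := !![C, -(C/2); -(C/2), C] with hQdef
  have hQsymm : Qᵀ = Q := by
    ext i j; fin_cases i <;> fin_cases j <;> simp [hQdef]
  have hQpos : Q.PosDef := by
    refine Matrix.posDef_iff_dotProduct_mulVec.mpr ⟨?_, fun x hx => ?_⟩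
    · show Qᴴ = Q
      ext i j; fin_cases i <;> fin_cases j <;> simp [hQdef]
    · have hval : star x ⬝ᵥ (Q *ᵥ x) =
          (C/2) * ((x 0 - x 1)^2 + (x 0)^2 + (x 1)^2) := by
        simp [hQdef, Matrix.mulVec, dotProduct, Fin.sum_univ_two]
        ring
      rw [hval]
      have hx' : x 0 ≠ 0 ∨ x 1 ≠ 0 := by
        by_contra h
        push_neg at h
        apply hx
        funext i; fin_cases i <;> simp [h.1, h.2]
      rcases hx' with h | h
      · nlinarith [sq_nonneg (x 0 - x 1), sq_nonneg (x 1), sq_pos_of_ne_zero h]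
      · nlinarith [sq_nonneg (x 0 - x 1), sq_nonneg (x 0), sq_pos_of_ne_zero h]
  -- the candidate metric tensor
  set M₀ : Matrix (Fin 2) (Fin 2) ℝ := (Pᵀ)⁻¹ * Q * P⁻¹ with hM₀def
  -- key identity
  have hkey : ∀ M : Matrix (Fin 2) (Fin 2) ℝ, ∀ i j : Fin 2,
      (Pᵀ * M * P) i j = (![e₁, e₂] i) ⬝ᵥ (M *ᵥ ![e₁, e₂] j) := by
    intro M i j
    fin_cases i <;> fin_cases j <;>
      simp [hPdef, Matrix.mul_apply, Matrix.mulVec, Matrix.vecMul, dotProduct,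
        Fin.sum_univ_two, Matrix.vecHead, Matrix.vecTail, Matrix.transpose_apply] <;> ring
  have hconj : Pᵀ * M₀ * P = Q := by
    rw [hM₀def]
    simp only [Matrix.mul_assoc, Matrix.inv_mul_of_invertible, Matrix.mul_one]
    rw [Matrix.mul_inv_cancel_left_of_invertible]
  have hQM : ∀ i j, (![e₁, e₂] i) ⬝ᵥ (M₀ *ᵥ ![e₁, e₂] j) = Q i j :=
    fun i j => (hkey M₀ i j).symm.trans (by rw [hconj])
  have h00 := hQM 0 0
  have h01 := hQM 0 1
  have h10 := hQM 1 0
  have h11 := hQM 1 1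
  simp only [hQdef, Matrix.cons_val', Matrix.cons_val_zero, Matrix.cons_val_one,
    Matrix.head_cons, Matrix.empty_val', Matrix.cons_val_fin_one, Matrix.of_apply, Matrix.vecHead, Matrix.vecTail]
    at h00 h01 h10 h11
  -- bilinear expansion of the third condition
  have hexp : ∀ M : Matrix (Fin 2) (Fin 2) ℝ, e₃ ⬝ᵥ (M *ᵥ e₃)
      = e₁ ⬝ᵥ (M *ᵥ e₁) + e₁ ⬝ᵥ (M *ᵥ e₂) + e₂ ⬝ᵥ (M *ᵥ e₁) + e₂ ⬝ᵥ (M *ᵥ e₂) := by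
    intro M
    subst he₃
    simp only [sub_eq_add_neg, Matrix.mulVec_add, Matrix.mulVec_neg,
      add_dotProduct, neg_dotProduct, dotProduct_add,
      dotProduct_neg]
    ring
  have hM₀symm : M₀.IsSymm := by
    show M₀ᵀ = M₀
    rw [hM₀def]
    simp only [Matrix.transpose_mul, Matrix.transpose_nonsing_inv, transpose_transpose,
      hQsymm, Matrix.mul_assoc]
  have hM₀pos : M₀.PosDef := by
    refine Matrix.posDef_iff_dotProduct_mulVec.mpr ⟨?_, fun x hx => ?_⟩
    · show M₀ᴴ = M₀
      ext i j
      simpa [Matrix.conjTranspose_apply] using congrFun (congrFun hM₀symm i) j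
    · have hPinv : IsUnit P⁻¹ := Matrix.isUnit_nonsing_inv_iff.mpr hPu
      have hy : P⁻¹ *ᵥ x ≠ 0 := by
        intro h
        exact hx (Matrix.mulVec_injective_iff_isUnit.mpr hPinv
          (by rw [h, Matrix.mulVec_zero]))
      have hval : star x ⬝ᵥ (M₀ *ᵥ x) = star (P⁻¹ *ᵥ x) ⬝ᵥ (Q *ᵥ (P⁻¹ *ᵥ x)) := by
        rw [hM₀def, ← Matrix.mulVec_mulVec, ← Matrix.mulVec_mulVec,
          ← Matrix.transpose_nonsing_inv, Matrix.dotProduct_mulVec,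
          Matrix.vecMul_transpose]
        simp [star_trivial]
      rw [hval]
      exact hQpos.dotProduct_mulVec_pos hy
  refine ⟨M₀, ⟨hM₀symm, hM₀pos, h00, h11, ?_⟩, ?_⟩
  · rw [hexp M₀, h00, h01, h10, h11]; ring
  · rintro M ⟨hMsymm, -, h1, h2, h3⟩
    have h12 : e₁ ⬝ᵥ (M *ᵥ e₂) = e₂ ⬝ᵥ (M *ᵥ e₁) := by
      rw [Matrix.dotProduct_mulVec, ← Matrix.mulVec_transpose, hMsymm.eq,
        dotProduct_comm]
    have hoff : e₁ ⬝ᵥ (M *ᵥ e₂) = -(C/2) := by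
      have h3' := h3
      rw [hexp M, h1, h2, ← h12] at h3'
      linarith
    have hN : Pᵀ * M * P = Q := by
      ext i j
      rw [hkey M i j]
      fin_cases i <;> fin_cases j <;>
        simp only [Matrix.cons_val_zero, Matrix.cons_val_one, Matrix.head_cons, hQdef,
          Matrix.cons_val', Matrix.empty_val', Matrix.cons_val_fin_one, Matrix.of_apply, Matrix.vecHead, Matrix.vecTail]
      · exact h1.trans (by norm_num)
      · exact hoff.trans (by norm_num)
      · exact (h12.symm.trans hoff).trans (by norm_num)
      · exact h2.trans (by norm_num)
    have : M = Pᵀ⁻¹ * (Pᵀ * M * P) * P⁻¹ := by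
      rw [Matrix.mul_assoc Pᵀ M P, Matrix.inv_mul_cancel_left_of_invertible,
        Matrix.mul_inv_cancel_right_of_invertible]
    rw [this, hN, hM₀def]
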